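/- Let m ≥ 2 be an integer, c a real constant, and w : (0,∞) → ℝ a differentiable function with |w(r)| < 1 for all r > 0. Define u : (0,∞) → ℝ by u(r) = w(r)/√(1 − w(r)²). Then w satisfies w'(r) = c·(1 − w(r)²)^(3/2) − (m−1)·coth(r)·w(r)·(1 − w(r)²) for all r > 0 if and only if u is differentiable and satisfies u'(r) = c − (m−1)·coth(r)·u(r) for all r > 0. -/

import Mathlib

lemma aux_deriv (w : ℝ → ℝ) (r : ℝ) (hd : DifferentiableAt ℝ w r) (h1 : |w r| < 1) :
    HasDerivAt (fun x => w x / Real.sqrt (1 - w x ^ 2))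
      (deriv w r / (1 - w r ^ 2) ^ ((3:ℝ)/2)) r := by
  have habs := abs_lt.mp h1
  have hs : 0 < 1 - w r ^ 2 := by nlinarith [habs.1, habs.2]
  have hsrt : 0 < Real.sqrt (1 - w r ^ 2) := Real.sqrt_pos.mpr hs
  have hw' := hd.hasDerivAt
  have h2 : HasDerivAt (fun x => 1 - w x ^ 2) (-(2 * w r * deriv w r)) r := by
    have h3 := (hasDerivAt_const r (1:ℝ)).sub (hw'.pow 2)
    exact h3.congr_deriv (by ring)
  have hsq : HasDerivAt (fun x => Real.sqrt (1 - w x ^ 2))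
      ((1 / (2 * Real.sqrt (1 - w r ^ 2))) * (-(2 * w r * deriv w r))) r :=
    (Real.hasDerivAt_sqrt hs.ne').comp r h2
  have hdiv := hw'.div hsq hsrt.ne'
  refine hdiv.congr_deriv ?_
  symm
  have h32 : (1 - w r ^ 2) ^ ((3:ℝ)/2) = (1 - w r ^ 2) * Real.sqrt (1 - w r ^ 2) := by
    rw [Real.sqrt_eq_rpow]
    rw [show ((3:ℝ)/2) = 1 + 1/2 by norm_num, Real.rpow_add hs, Real.rpow_one]
  have hsq2 : Real.sqrt (1 - w r ^ 2) ^ 2 = 1 - w r ^ 2 := Real.sq_sqrt hs.le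
  rw [h32]
  field_simp
  linear_combination (deriv w r * w r ^ 2) * hsq2

/-- For `m ≥ 2`, `c ∈ ℝ` and a function `w` differentiable on `(0,∞)` with
`|w| < 1` there, setting `u = w/√(1-w²)`, the nonlinear ODE
`w' = c (1-w²)^{3/2} - (m-1) coth r · w (1-w²)` holds on `(0,∞)` iff `u` is
differentiable there and satisfies the linear ODE `u' = c - (m-1) coth r · u`. -/
theorem stmt_7 (m : ℕ) (hm : 2 ≤ m) (c : ℝ) (w : ℝ → ℝ)
    (hw : ∀ r : ℝ, 0 < r → DifferentiableAt ℝ w r)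
    (hw1 : ∀ r : ℝ, 0 < r → |w r| < 1)
    (u : ℝ → ℝ) (hu : ∀ r : ℝ, u r = w r / Real.sqrt (1 - w r ^ 2)) :
    (∀ r : ℝ, 0 < r →
        deriv w r = c * (1 - w r ^ 2) ^ ((3:ℝ)/2)
          - ((m : ℝ) - 1) * (Real.cosh r / Real.sinh r) * w r * (1 - w r ^ 2)) ↔
      (∀ r : ℝ, 0 < r →
        HasDerivAt u (c - ((m : ℝ) - 1) * (Real.cosh r / Real.sinh r) * u r) r) := by
  have hue : u = fun x => w x / Real.sqrt (1 - w x ^ 2) := funext hu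
  constructor
  · intro hODE r hr
    have habs := abs_lt.mp (hw1 r hr)
    have hs : 0 < 1 - w r ^ 2 := by nlinarith [habs.1, habs.2]
    have hsrt : 0 < Real.sqrt (1 - w r ^ 2) := Real.sqrt_pos.mpr hs
    have hsq2 : Real.sqrt (1 - w r ^ 2) ^ 2 = 1 - w r ^ 2 := Real.sq_sqrt hs.le
    have h32 : (1 - w r ^ 2) ^ ((3:ℝ)/2) = (1 - w r ^ 2) * Real.sqrt (1 - w r ^ 2) := by
      rw [Real.sqrt_eq_rpow]
      rw [show ((3:ℝ)/2) = 1 + 1/2 by norm_num, Real.rpow_add hs, Real.rpow_one]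
    have h32pos : (0:ℝ) < (1 - w r ^ 2) ^ ((3:ℝ)/2) := Real.rpow_pos_of_pos hs _
    have hD := aux_deriv w r (hw r hr) (hw1 r hr)
    rw [← hue] at hD
    convert hD using 1
    rw [hODE r hr, hu r, h32]
    set K := ((m : ℝ) - 1) * (Real.cosh r / Real.sinh r)
    field_simp
  · intro hODE r hr
    have habs := abs_lt.mp (hw1 r hr)
    have hs : 0 < 1 - w r ^ 2 := by nlinarith [habs.1, habs.2]
    have hsrt : 0 < Real.sqrt (1 - w r ^ 2) := Real.sqrt_pos.mpr hs
    have hsq2 : Real.sqrt (1 - w r ^ 2) ^ 2 = 1 - w r ^ 2 := Real.sq_sqrt hs.le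
    have h32 : (1 - w r ^ 2) ^ ((3:ℝ)/2) = (1 - w r ^ 2) * Real.sqrt (1 - w r ^ 2) := by
      rw [Real.sqrt_eq_rpow]
      rw [show ((3:ℝ)/2) = 1 + 1/2 by norm_num, Real.rpow_add hs, Real.rpow_one]
    have hD := aux_deriv w r (hw r hr) (hw1 r hr)
    rw [← hue] at hD
    have huniq := hD.unique (hODE r hr)
    rw [hu r] at huniq
    set K := ((m : ℝ) - 1) * (Real.cosh r / Real.sinh r)
    rw [h32, div_eq_iff (by positivity)] at huniq
    rw [h32, huniq]
    field_simp
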